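/- arXiv:2210.04157 — 6 statements merged into one kernel-verified Lean document; each statement's English description precedes it below -/
import Mathlib

section
/- Let Z be a countable set, let D be a set of probability distributions on Z, and define the coverability coefficient C_cov(D) = inf over probability distributions μ on Z of sup_{d ∈ D} sup_{z ∈ Z} d(z)/μ(z). Then C_cov(D) equals the cumulative reachability sum_{z ∈ Z} sup_{d ∈ D} d(z) (both possibly infinite). -/
open scoped ENNReal

/-- Coverability coefficient equals cumulative reachability. -/
theorem coverability_eq_cumulative_reachability
    {Z : Type*} [Countable Z]
    (D : Set (Z → ℝ≥0∞)) (hD : D.Nonempty)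
    (hdist : ∀ d ∈ D, ∑' z, d z = 1) :
    (⨅ μ : {μ : Z → ℝ≥0∞ // ∑' z, μ z = 1},
        ⨆ d ∈ D, ⨆ z : Z, d z / μ.1 z)
      = ∑' z : Z, ⨆ d ∈ D, d z := by
  set g : Z → ℝ≥0∞ := fun z => ⨆ d ∈ D, d z with hg
  set S : ℝ≥0∞ := ∑' z, g z with hS
  obtain ⟨d₀, hd₀⟩ := hD
  have hle_g : ∀ d ∈ D, ∀ z, d z ≤ g z := by
    intro d hd z
    exact le_biSup (f := fun d => d z) hd
  have hS1 : (1 : ℝ≥0∞) ≤ S := by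
    rw [← hdist d₀ hd₀]
    exact Summable.tsum_le_tsum (fun z => hle_g d₀ hd₀ z) ENNReal.summable ENNReal.summable
  have hS0 : S ≠ 0 := by
    intro h; rw [h] at hS1; simp at hS1
  apply le_antisymm
  · -- inf ≤ S
    rcases eq_or_ne S ⊤ with hStop | hStop
    · rw [hStop]; exact le_top
    · have hμsum : ∑' z, g z * S⁻¹ = 1 := by
        rw [ENNReal.tsum_mul_right, ← hS, ENNReal.mul_inv_cancel hS0 hStop]
      refine iInf_le_of_le ⟨fun z => g z * S⁻¹, hμsum⟩ ?_
      refine iSup₂_le fun d hd => iSup_le fun z => ?_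
      rcases eq_or_ne (g z) 0 with hgz | hgz
      · have : d z = 0 := le_antisymm (hgz ▸ hle_g d hd z) (zero_le)
        simp [this]
      · have hgS : g z ≤ S := ENNReal.le_tsum z
        have hb0 : g z * S⁻¹ ≠ 0 := by
          exact mul_ne_zero hgz (ENNReal.inv_ne_zero.mpr hStop)
        rw [ENNReal.div_le_iff_le_mul (Or.inl hb0) (Or.inr hS0)]
        calc d z ≤ g z := hle_g d hd z
          _ = S * (g z * S⁻¹) := by
              rw [← mul_assoc, mul_comm S (g z), mul_assoc,
                ENNReal.mul_inv_cancel hS0 hStop, mul_one]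
  · -- S ≤ inf
    refine le_iInf fun μ => ?_
    set K : ℝ≥0∞ := ⨆ d ∈ D, ⨆ z : Z, d z / μ.1 z with hK
    by_cases hzero : ∃ d ∈ D, ∃ z, μ.1 z = 0 ∧ d z ≠ 0
    · obtain ⟨d, hd, z, hμz, hdz⟩ := hzero
      have hK' : d z / μ.1 z ≤ K :=
        le_iSup₂_of_le d hd (le_iSup (fun z => d z / μ.1 z) z)
      have htop : d z / μ.1 z = ⊤ := by rw [hμz]; exact ENNReal.div_zero hdz
      rw [htop] at hK'
      exact le_top.trans hK'
    · push_neg at hzero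
      have hμtop : ∀ z, μ.1 z ≠ ⊤ := by
        intro z h
        have h2 : μ.1 z ≤ ∑' z, μ.1 z := ENNReal.le_tsum z
        rw [μ.2, h] at h2
        exact (not_le.mpr (by norm_num : (1:ℝ≥0∞) < ⊤)) h2
      have hdK : ∀ d ∈ D, ∀ z, d z ≤ K * μ.1 z := by
        intro d hd z
        rcases eq_or_ne (μ.1 z) 0 with hμz | hμz
        · have := hzero d hd z hμz
          simp [this]
        · have h1 : d z = d z / μ.1 z * μ.1 z :=
            (ENNReal.div_mul_cancel hμz (hμtop z)).symm
          rw [h1]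
          exact mul_le_mul_left
            (le_iSup₂_of_le d hd (le_iSup (fun z => d z / μ.1 z) z)) _
      have hgK : ∀ z, g z ≤ K * μ.1 z := fun z =>
        iSup₂_le fun d hd => hdK d hd z
      calc S ≤ ∑' z, K * μ.1 z :=
              Summable.tsum_le_tsum hgK ENNReal.summable ENNReal.summable
        _ = K * ∑' z, μ.1 z := ENNReal.tsum_mul_left
        _ = K := by rw [μ.2, mul_one]
end

section
/- (Per-state-action elliptic potential lemma.) Let d^(1), ..., d^(T) be probability distributions over a set Z, and let μ be a probability distribution on Z such that d^(t)(z) ≤ C·μ(z) for all z ∈ Z and t ∈ [T], where C > 0. Then for every z ∈ Z, sum_{t=1}^T d^(t)(z) / (sum_{i<t} d^(i)(z) + C·μ(z)) ≤ 2·log(T + 1). -/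
lemma half_le_log_one_add {x : ℝ} (hx0 : 0 ≤ x) (hx1 : x ≤ 1) :
    x ≤ 2 * Real.log (1 + x) := by
  have h1 : (0:ℝ) < 1 + x := by linarith
  have h2 : Real.log (1 + x)⁻¹ ≤ (1 + x)⁻¹ - 1 :=
    Real.log_le_sub_one_of_pos (by positivity)
  rw [Real.log_inv] at h2
  have h3 : x / (1 + x) ≤ Real.log (1 + x) := by
    have : (1 + x)⁻¹ - 1 = -(x / (1 + x)) := by
      field_simp
      ring
    linarith [h2, this ▸ h2]
  have h4 : x / 2 ≤ x / (1 + x) := by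
    rw [div_le_div_iff₀ (by norm_num) h1]
    nlinarith
  linarith

/-- Per-state-action elliptic potential lemma. -/
theorem per_state_elliptic_potential
    {Z : Type*} {T : ℕ}
    (d : Fin T → Z → ℝ) (μ : Z → ℝ) (C : ℝ) (hC : 0 < C)
    (hd0 : ∀ t z, 0 ≤ d t z) (hμ0 : ∀ z, 0 ≤ μ z)
    (hcov : ∀ t z, d t z ≤ C * μ z) :
    ∀ z : Z, ∑ t : Fin T, d t z / ((∑ i ∈ Finset.Iio t, d i z) + C * μ z)
      ≤ 2 * Real.log (T + 1) := by
  intro z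
  set M : ℝ := C * μ z with hM
  have hM0 : 0 ≤ M := mul_nonneg hC.le (hμ0 z)
  rcases eq_or_lt_of_le hM0 with hM0' | hMpos
  · -- M = 0, all d t z = 0
    have hz : ∀ t, d t z = 0 := fun t => le_antisymm
      (by have h := hcov t z; rw [← hM, ← hM0'] at h; exact h) (hd0 t z)
    have : ∀ t : Fin T, d t z / ((∑ i ∈ Finset.Iio t, d i z) + M) = 0 := by
      intro t; rw [hz t]; simp
    rw [Finset.sum_congr rfl (fun t _ => this t), Finset.sum_const, smul_zero]
    have : (0:ℝ) ≤ Real.log (T + 1) := Real.log_nonneg (by exact_mod_cast Nat.one_le_iff_ne_zero.mpr (by simp))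
    linarith
  · set a : ℕ → ℝ := fun n => if h : n < T then d ⟨n, h⟩ z else 0 with ha
    have ha0 : ∀ n, 0 ≤ a n := by
      intro n; simp only [ha]; split
      · exact hd0 _ z
      · exact le_refl 0
    have haM : ∀ n, a n ≤ M := by
      intro n; simp only [ha]; split
      · exact hcov _ z
      · exact hM0
    set S : ℕ → ℝ := fun n => (∑ i ∈ Finset.range n, a i) + M with hS
    have hSpos : ∀ n, 0 < S n := by
      intro n
      have : 0 ≤ ∑ i ∈ Finset.range n, a i := Finset.sum_nonneg fun i _ => ha0 i
      simp only [hS]; linarith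
    have hSsucc : ∀ n, S (n + 1) = S n + a n := by
      intro n; simp only [hS, Finset.sum_range_succ]; ring
    have hIio : ∀ t : Fin T, (∑ i ∈ Finset.Iio t, d i z) = ∑ i ∈ Finset.range t.val, a i := by
      intro t
      refine Finset.sum_bij' (fun (i : Fin T) _ => (i : ℕ))
        (fun n hn => ⟨n, (Finset.mem_range.mp hn).trans t.isLt⟩) ?_ ?_ ?_ ?_ ?_
      · intro i hi
        simp only [Finset.mem_Iio, Fin.lt_def] at hi
        exact Finset.mem_range.mpr hi
      · intro n hn
        simpa [Finset.mem_Iio, Fin.lt_def] using Finset.mem_range.mp hn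
      · intro i hi; rfl
      · intro n hn; rfl
      · intro i hi
        simp only [Finset.mem_Iio, Fin.lt_def] at hi
        simp only [ha, dif_pos (hi.trans t.isLt)]
    -- per-term bound
    have hterm : ∀ t : Fin T,
        d t z / ((∑ i ∈ Finset.Iio t, d i z) + M)
          ≤ 2 * (Real.log (S (t.val + 1)) - Real.log (S t.val)) := by
      intro t
      rw [hIio t]
      have hat : a t.val = d t z := by simp [ha, t.isLt]
      have hxS : a t.val ≤ S t.val := by
        have : 0 ≤ ∑ i ∈ Finset.range t.val, a i := Finset.sum_nonneg fun i _ => ha0 i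
        have := haM t.val
        simp only [hS]; linarith
      have hs := hSpos t.val
      have key : a t.val / S t.val ≤ 2 * Real.log (1 + a t.val / S t.val) := by
        apply half_le_log_one_add (div_nonneg (ha0 _) hs.le)
        rw [div_le_one hs]; exact hxS
      have hlog : Real.log (1 + a t.val / S t.val)
          = Real.log (S (t.val + 1)) - Real.log (S t.val) := by
        rw [← Real.log_div (ne_of_gt (hSpos _)) (ne_of_gt hs)]
        congr 1
        rw [hSsucc]
        field_simp
      rw [← hat]
      calc a t.val / ((∑ i ∈ Finset.range t.val, a i) + M)
          = a t.val / S t.val := by rw [hS]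
        _ ≤ 2 * Real.log (1 + a t.val / S t.val) := key
        _ = 2 * (Real.log (S (t.val + 1)) - Real.log (S t.val)) := by rw [hlog]
    calc ∑ t : Fin T, d t z / ((∑ i ∈ Finset.Iio t, d i z) + M)
        ≤ ∑ t : Fin T, 2 * (Real.log (S (t.val + 1)) - Real.log (S t.val)) :=
          Finset.sum_le_sum fun t _ => hterm t
      _ = ∑ n ∈ Finset.range T, 2 * (Real.log (S (n + 1)) - Real.log (S n)) := by
          exact Fin.sum_univ_eq_sum_range (fun n => 2 * (Real.log (S (n + 1)) - Real.log (S n))) T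
      _ = 2 * (Real.log (S T) - Real.log (S 0)) := by
          rw [← Finset.mul_sum, Finset.sum_range_sub (fun n => Real.log (S n))]
      _ ≤ 2 * Real.log (T + 1) := by
          have hST : S T ≤ (T + 1) * M := by
            have : (∑ i ∈ Finset.range T, a i) ≤ T * M := by
              calc (∑ i ∈ Finset.range T, a i) ≤ ∑ i ∈ Finset.range T, M :=
                    Finset.sum_le_sum fun i _ => haM i
                _ = T * M := by rw [Finset.sum_const, Finset.card_range, nsmul_eq_mul]
            simp only [hS]; linarith
          have hS0 : S 0 = M := by simp [hS]
          have h1 : Real.log (S T) ≤ Real.log ((T + 1) * M) :=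
            Real.log_le_log (hSpos T) hST
          have h2 : Real.log ((T + 1) * M) = Real.log (T + 1) + Real.log M := by
            rw [Real.log_mul (by positivity) (ne_of_gt hMpos)]
          rw [hS0]
          nlinarith [h1, h2]
end

section
/- (Extrapolation error bound under coverability.) Let Z be a countable set, μ* a probability distribution on Z, C > 0, and let d^(1),...,d^(T) be probability distributions on Z with d^(t)(z) ≤ C·μ*(z) for all t and z. Define D^(t)(z) := sum_{i<t} d^(i)(z). Then sum_{t=1}^T sum_{z ∈ Z} (d^(t)(z))² / (D^(t)(z) + C·μ*(z)) ≤ 2·C·log(T + 1). -/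
lemma half_le_log (u : ℝ) (h0 : 0 ≤ u) (h1 : u ≤ 1) : u ≤ 2 * Real.log (1 + u) := by
  have hpos : (0:ℝ) < 1 + u := by linarith
  have h1u : 1 - u/2 > 0 := by linarith
  have hexp : Real.exp (u/2) ≤ 1 + u := by
    have h2 : 1 - u/2 ≤ Real.exp (-(u/2)) := by
      have := Real.add_one_le_exp (-(u/2)); linarith
    have h3 : (1 - u/2) * Real.exp (u/2) ≤ 1 := by
      calc (1 - u/2) * Real.exp (u/2) ≤ Real.exp (-(u/2)) * Real.exp (u/2) := by
            exact mul_le_mul_of_nonneg_right h2 (Real.exp_pos _).le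
        _ = 1 := by rw [← Real.exp_add]; simp
    have h4 : Real.exp (u/2) ≤ 1 / (1 - u/2) := by
      rw [le_div_iff₀ h1u]; linarith [h3]
    have h5 : 1 / (1 - u/2) ≤ 1 + u := by
      rw [div_le_iff₀ h1u]; nlinarith
    linarith
  have := (Real.le_log_iff_exp_le hpos).2 hexp
  linarith

lemma key_sum (a : ℝ) (ha : 0 < a) (b : ℕ → ℝ) (hb : ∀ n, 0 ≤ b n)
    (hba : ∀ n, b n ≤ a) (N : ℕ) :
    ∑ n ∈ Finset.range N, (b n) ^ 2 / (∑ i ∈ Finset.range n, b i + a)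
      ≤ 2 * a * (Real.log (∑ i ∈ Finset.range N, b i + a) - Real.log a) := by
  induction N with
  | zero => simp
  | succ N ih =>
    have hS : ∀ n, 0 ≤ ∑ i ∈ Finset.range n, b i :=
      fun n => Finset.sum_nonneg fun i _ => hb i
    set s := ∑ i ∈ Finset.range N, b i with hs
    have hsa : 0 < s + a := by linarith [hS N]
    have hxa : 0 < s + b N + a := by linarith [hb N]
    have hu0 : 0 ≤ b N / (s + a) := div_nonneg (hb N) hsa.le
    have hu1 : b N / (s + a) ≤ 1 := by
      rw [div_le_one hsa]; linarith [hba N, hS N]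
    have hlog := half_le_log _ hu0 hu1
    have hratio : 1 + b N / (s + a) = (s + b N + a) / (s + a) := by
      field_simp; ring
    have hstep : (b N) ^ 2 / (s + a)
        ≤ 2 * a * (Real.log (s + b N + a) - Real.log (s + a)) := by
      have hld : Real.log (s + b N + a) - Real.log (s + a)
          = Real.log ((s + b N + a) / (s + a)) := by
        rw [Real.log_div hxa.ne' hsa.ne']
      rw [hld, ← hratio]
      have h1 : (b N) ^ 2 / (s + a) = b N * (b N / (s + a)) := by ring
      rw [h1]
      calc b N * (b N / (s + a)) ≤ a * (b N / (s + a)) :=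
            mul_le_mul_of_nonneg_right (hba N) hu0
        _ ≤ a * (2 * Real.log (1 + b N / (s + a))) :=
            mul_le_mul_of_nonneg_left hlog ha.le
        _ = 2 * a * Real.log (1 + b N / (s + a)) := by ring
    rw [Finset.sum_range_succ, Finset.sum_range_succ]
    have : ∑ i ∈ Finset.range N, b i + b N + a = s + b N + a := by rw [hs]
    rw [this]
    calc (∑ n ∈ Finset.range N, (b n) ^ 2 / (∑ i ∈ Finset.range n, b i + a))
          + (b N) ^ 2 / (s + a)
        ≤ 2 * a * (Real.log (s + a) - Real.log a)
          + 2 * a * (Real.log (s + b N + a) - Real.log (s + a)) := by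
          exact add_le_add ih hstep
      _ = 2 * a * (Real.log (s + b N + a) - Real.log a) := by ring

/-- Extrapolation error bound under coverability. -/
theorem extrapolation_error_bound
    {Z : Type*} [Countable Z] {T : ℕ}
    (d : Fin T → Z → ℝ) (μ : Z → ℝ) (C : ℝ) (hC : 0 < C)
    (hd0 : ∀ t z, 0 ≤ d t z) (hμ0 : ∀ z, 0 ≤ μ z)
    (hdsum : ∀ t, ∑' z, d t z = 1) (hμsum : ∑' z, μ z = 1)
    (hcov : ∀ t z, d t z ≤ C * μ z) :
    ∑ t : Fin T, ∑' z : Z,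
        (d t z) ^ 2 / ((∑ i ∈ Finset.Iio t, d i z) + C * μ z)
      ≤ 2 * C * Real.log (T + 1) := by
  classical
  set F : Fin T → Z → ℝ := fun t z =>
    (d t z) ^ 2 / ((∑ i ∈ Finset.Iio t, d i z) + C * μ z) with hF
  -- pointwise nonneg and domination by d t z
  have hF0 : ∀ t z, 0 ≤ F t z := by
    intro t z
    apply div_nonneg (sq_nonneg _)
    have := Finset.sum_nonneg (fun i (_ : i ∈ Finset.Iio t) => hd0 i z)
    have := mul_nonneg hC.le (hμ0 z)
    linarith
  have hFle : ∀ t z, F t z ≤ d t z := by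
    intro t z
    have hDn : 0 ≤ ∑ i ∈ Finset.Iio t, d i z :=
      Finset.sum_nonneg fun i _ => hd0 i z
    rcases eq_or_lt_of_le (mul_nonneg hC.le (hμ0 z)) with h | h
    · have hcz := hcov t z
      have hdz : d t z = 0 := le_antisymm (by linarith) (hd0 t z)
      simp [hF, hdz, hd0 t z]
    · have hden : 0 < (∑ i ∈ Finset.Iio t, d i z) + C * μ z := by linarith
      rw [hF, div_le_iff₀ hden]
      have : d t z ≤ (∑ i ∈ Finset.Iio t, d i z) + C * μ z := by
        linarith [hcov t z]
      nlinarith [hd0 t z]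
  -- summability
  have hsumd : ∀ t, Summable (d t) := by
    intro t
    by_contra h
    have := tsum_eq_zero_of_not_summable h
    rw [hdsum t] at this; norm_num at this
  have hsumμ : Summable μ := by
    by_contra h
    have := tsum_eq_zero_of_not_summable h
    rw [hμsum] at this; norm_num at this
  have hsumF : ∀ t, Summable (F t) := fun t =>
    Summable.of_nonneg_of_le (hF0 t) (hFle t) (hsumd t)
  -- swap sums
  have hswap : ∑ t : Fin T, ∑' z : Z, F t z = ∑' z : Z, ∑ t : Fin T, F t z :=
    (Summable.tsum_finsetSum fun t _ => hsumF t).symm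
  rw [show (∑ t : Fin T, ∑' z : Z,
        (d t z) ^ 2 / ((∑ i ∈ Finset.Iio t, d i z) + C * μ z))
      = ∑ t : Fin T, ∑' z : Z, F t z from rfl, hswap]
  -- pointwise bound on the inner (now finite over t) sum
  have hlogT : 0 ≤ Real.log (T + 1) := by
    apply Real.log_nonneg; push_cast; linarith [Nat.cast_nonneg (α := ℝ) T]
  have hpoint : ∀ z, ∑ t : Fin T, F t z ≤ 2 * C * Real.log (T + 1) * μ z := by
    intro z
    rcases eq_or_lt_of_le (hμ0 z) with hz | hz
    · have hdz : ∀ t, d t z = 0 := fun t =>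
        le_antisymm (by have := hcov t z; rw [← hz] at this; simpa using this) (hd0 t z)
      simp [hF, hdz, ← hz]
    · set a := C * μ z with hadef
      have ha : 0 < a := mul_pos hC hz
      set b : ℕ → ℝ := fun n => if h : n < T then d ⟨n, h⟩ z else 0 with hbdef
      have hb0 : ∀ n, 0 ≤ b n := by
        intro n; rw [hbdef]; dsimp only; split
        · exact hd0 _ z
        · exact le_refl 0
      have hba : ∀ n, b n ≤ a := by
        intro n; rw [hbdef]; dsimp only; split
        · exact hcov _ z
        · exact ha.le
      have hIio : ∀ t : Fin T, ∑ i ∈ Finset.Iio t, d i z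
          = ∑ i ∈ Finset.range t.1, b i := by
        intro t
        rw [← Nat.Iio_eq_range, ← Fin.map_valEmbedding_Iio, Finset.sum_map]
        apply Finset.sum_congr rfl
        intro i _
        simp only [Fin.valEmbedding_apply, hbdef, i.isLt, dif_pos]
      have hFeq : ∀ t : Fin T, F t z
          = (b t.1) ^ 2 / (∑ i ∈ Finset.range t.1, b i + a) := by
        intro t
        rw [hF]
        dsimp only
        rw [hIio t, hadef]
        congr 1
        rw [hbdef]; simp [t.isLt]
      have hsum_eq : ∑ t : Fin T, F t z
          = ∑ n ∈ Finset.range T, (b n) ^ 2 / (∑ i ∈ Finset.range n, b i + a) := by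
        rw [Finset.sum_congr rfl fun t _ => hFeq t]
        exact Fin.sum_univ_eq_sum_range
          (fun n => (b n) ^ 2 / (∑ i ∈ Finset.range n, b i + a)) T
      rw [hsum_eq]
      have hkey := key_sum a ha b hb0 hba T
      have hST : ∑ i ∈ Finset.range T, b i ≤ T * a := by
        calc ∑ i ∈ Finset.range T, b i ≤ ∑ _i ∈ Finset.range T, a :=
              Finset.sum_le_sum fun i _ => hba i
          _ = T * a := by simp [mul_comm]
      have hS0 : 0 ≤ ∑ i ∈ Finset.range T, b i :=
        Finset.sum_nonneg fun i _ => hb0 i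
      have hlogle : Real.log (∑ i ∈ Finset.range T, b i + a) - Real.log a
          ≤ Real.log (T + 1) := by
        rw [← Real.log_div (by linarith : (0:ℝ) < _).ne' ha.ne']
        apply Real.log_le_log (by positivity)
        rw [div_le_iff₀ ha]
        have : (0:ℝ) ≤ (T:ℝ) := Nat.cast_nonneg T
        nlinarith
      calc ∑ n ∈ Finset.range T, (b n) ^ 2 / (∑ i ∈ Finset.range n, b i + a)
          ≤ 2 * a * (Real.log (∑ i ∈ Finset.range T, b i + a) - Real.log a) := hkey
        _ ≤ 2 * a * Real.log (T + 1) :=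
            mul_le_mul_of_nonneg_left hlogle (by linarith)
        _ = 2 * C * Real.log (T + 1) * μ z := by rw [hadef]; ring
  -- conclude
  have hsumInner : Summable fun z => ∑ t : Fin T, F t z :=
    (hasSum_sum fun t _ => (hsumF t).hasSum).summable
  have hsumRHS : Summable fun z => 2 * C * Real.log (T + 1) * μ z :=
    Summable.mul_left _ hsumμ
  calc ∑' z : Z, ∑ t : Fin T, F t z
      ≤ ∑' z : Z, 2 * C * Real.log (T + 1) * μ z :=
        Summable.tsum_le_tsum hpoint hsumInner hsumRHS
    _ = 2 * C * Real.log (T + 1) * ∑' z, μ z := tsum_mul_left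
    _ = 2 * C * Real.log (T + 1) := by rw [hμsum, mul_one]
end

section
/- (Squared Bellman–Eluder dimension is bounded by SEC.) Let Ψ be a set of functions Z → [0,1] and D a set of distributions on Z. Suppose d^(1),...,d^(n) ∈ D and ψ^(1),...,ψ^(n) ∈ Ψ satisfy: for each t ∈ [n] there is ε^(t) ≥ ε with |E_{d^(t)}[ψ^(t)]| > ε^(t) and sum_{i<t} E_{d^(i)}[(ψ^(t))²] ≤ (ε^(t))². Then n ≤ (1/ε²) · sum_{t=1}^n (E_{d^(t)}[ψ^(t)])² / max(1, sum_{i<t} E_{d^(i)}[(ψ^(t))²]). In particular n ≤ SEC(Ψ, D, n)/ε², where SEC(Ψ, D, n) is the supremum of the displayed sum over all length-n sequences. -/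
/-- Squared Bellman–Eluder dimension is bounded by the SEC. -/
theorem sq_bedim_le_sec
    {Z : Type*} [Countable Z] {n : ℕ}
    (Ψ : Set (Z → ℝ)) (hΨ : ∀ ψ ∈ Ψ, ∀ z, ψ z ∈ Set.Icc (0 : ℝ) 1)
    (D : Set (Z → ℝ)) (hDd : ∀ d ∈ D, (∀ z, 0 ≤ d z) ∧ ∑' z, d z = 1)
    (ε : ℝ) (hε : 0 < ε) (hε1 : ε ≤ 1)
    (ψ : Fin n → Z → ℝ) (hψ : ∀ t, ψ t ∈ Ψ)
    (d : Fin n → Z → ℝ) (hd : ∀ t, d t ∈ D)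
    (ε' : Fin n → ℝ) (hε' : ∀ t, ε ≤ ε' t)
    (hbig : ∀ t, ε' t < |∑' z, d t z * ψ t z|)
    (hsmall : ∀ t, ∑ i ∈ Finset.Iio t, ∑' z, d i z * (ψ t z) ^ 2 ≤ (ε' t) ^ 2) :
    (n : ℝ) ≤ (1 / ε ^ 2) *
      ∑ t : Fin n, (∑' z, d t z * ψ t z) ^ 2
        / max 1 (∑ i ∈ Finset.Iio t, ∑' z, d i z * (ψ t z) ^ 2) := by
  have hε2 : (0:ℝ) < ε ^ 2 := by positivity
  rw [ge_iff_le.symm, div_mul_eq_mul_div, one_mul, ge_iff_le, le_div_iff₀ hε2]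
  have key : ∀ t : Fin n, ε ^ 2 ≤
      (∑' z, d t z * ψ t z) ^ 2
        / max 1 (∑ i ∈ Finset.Iio t, ∑' z, d i z * (ψ t z) ^ 2) := by
    intro t
    have hdn := (hDd (d t) (hd t)).1
    have hds := (hDd (d t) (hd t)).2
    -- d t is summable
    have hsum : Summable (d t) := by
      by_contra h
      rw [tsum_eq_zero_of_not_summable h] at hds
      norm_num at hds
    -- |E| ≤ 1
    have hψb := hΨ (ψ t) (hψ t)
    have hnn : ∀ z, 0 ≤ d t z * ψ t z := fun z =>
      mul_nonneg (hdn z) (hψb z).1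
    have hle : ∀ z, d t z * ψ t z ≤ d t z := fun z => by
      nlinarith [(hψb z).2, hdn z]
    have hsum2 : Summable (fun z => d t z * ψ t z) :=
      Summable.of_nonneg_of_le hnn hle hsum
    have hE1 : ∑' z, d t z * ψ t z ≤ 1 := by
      calc ∑' z, d t z * ψ t z ≤ ∑' z, d t z := Summable.tsum_le_tsum hle hsum2 hsum
        _ = 1 := hds
    have hE0 : 0 ≤ ∑' z, d t z * ψ t z := tsum_nonneg hnn
    have habs : |∑' z, d t z * ψ t z| = ∑' z, d t z * ψ t z := abs_of_nonneg hE0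
    have hbt := hbig t
    rw [habs] at hbt
    have hεt : ε' t < 1 := lt_of_lt_of_le hbt hE1
    have hεt0 : 0 < ε' t := lt_of_lt_of_le hε (hε' t)
    have hmax : max 1 (∑ i ∈ Finset.Iio t, ∑' z, d i z * (ψ t z) ^ 2) = 1 := by
      apply max_eq_left
      calc ∑ i ∈ Finset.Iio t, ∑' z, d i z * (ψ t z) ^ 2 ≤ (ε' t) ^ 2 := hsmall t
        _ ≤ 1 := by nlinarith
    rw [hmax, div_one]
    nlinarith [hε' t]
  calc (n : ℝ) * ε ^ 2 = ∑ _t : Fin n, ε ^ 2 := by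
        simp [mul_comm]
    _ ≤ _ := Finset.sum_le_sum fun t _ => key t
end

section
/- (Reward-free test function overestimates regret.) Consider a finite-horizon MDP with horizon H, Bellman operator T_h (with reward) and zero-reward Bellman operator P_h given by (P_h g_{h+1})(x,a) = E_{x' ∼ P_h(·|x,a)}[max_{a'} g_{h+1}(x', a')]. Let f = (f_1,...,f_H) with f_{H+1} = 0, and define g = (g_1,...,g_H) recursively by g_{H+1} = 0 and g_h = f_h − T_h f_{h+1} + P_h g_{h+1}. Then for every (x, a, h), g_h(x,a) ≥ f_h(x,a) − Q_h^{π_f}(x,a), where π_f is the greedy policy of f and Q_h^{π_f} is its Q-function. -/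
/-- `Qaux P R π k h x a` is the `Q`-function of the policy `π` at layer `h`
with `k` steps remaining (so that `Q_h^π = Qaux (H - h) h` when the horizon is
`H`). -/
noncomputable def Qaux {X A : Type*} [Fintype X]
    (P : ℕ → X → A → X → ℝ) (R : ℕ → X → A → ℝ) (π : ℕ → X → A) :
    ℕ → ℕ → X → A → ℝ
  | 0, _, _, _ => 0
  | k + 1, h, x, a =>
      R h x a + ∑ x', P h x a x' * Qaux P R π k (h + 1) x' (π (h + 1) x')

/-- `gaux P R f k h x a` is the reward-free test function defined recursively
by `g_h = f_h − T_h f_{h+1} + P_h g_{h+1}` (with `g` vanishing when no steps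
remain), where `T_h` is the Bellman optimality operator with reward and `P_h`
the zero-reward Bellman operator. -/
noncomputable def gaux {X A : Type*} [Fintype X] [Fintype A] [Nonempty A]
    (P : ℕ → X → A → X → ℝ) (R : ℕ → X → A → ℝ) (f : ℕ → X → A → ℝ) :
    ℕ → ℕ → X → A → ℝ
  | 0, _, _, _ => 0
  | k + 1, h, x, a =>
      f h x a - (R h x a + ∑ x', P h x a x' * (⨆ a' : A, f (h + 1) x' a'))
        + ∑ x', P h x a x' * (⨆ a' : A, gaux P R f k (h + 1) x' a')

/-- Reward-free test function overestimates regret: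
`g_h(x,a) ≥ f_h(x,a) − Q_h^{π_f}(x,a)` for all `(x,a,h)` with `h ≤ H`. -/
theorem reward_free_overestimates_regret
    {X A : Type*} [Fintype X] [Fintype A] [Nonempty A]
    (H : ℕ) (P : ℕ → X → A → X → ℝ) (R : ℕ → X → A → ℝ)
    (hP0 : ∀ h x a x', 0 ≤ P h x a x') (hP1 : ∀ h x a, ∑ x', P h x a x' = 1)
    (f : ℕ → X → A → ℝ) (hfH : ∀ x a, f H x a = 0)
    (π : ℕ → X → A) (hgreedy : ∀ h x a, f h x a ≤ f h x (π h x)) :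
    ∀ h x a, h ≤ H →
      f h x a - Qaux P R π (H - h) h x a ≤ gaux P R f (H - h) h x a := by
  suffices key : ∀ k, ∀ h x a, h ≤ H → H - h = k →
      f h x a - Qaux P R π k h x a ≤ gaux P R f k h x a by
    intro h x a hh; exact key _ h x a hh rfl
  intro k
  induction k with
  | zero =>
    intro h x a hh hk
    have : h = H := le_antisymm hh (Nat.sub_eq_zero_iff_le.mp hk)
    subst this
    simp [Qaux, gaux, hfH]
  | succ k ih =>
    intro h x a hh hk
    have hh1 : h + 1 ≤ H := by omega
    have hk1 : H - (h + 1) = k := by omega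
    simp only [Qaux, gaux]
    have hsum : ∑ x', P h x a x' * (⨆ a' : A, f (h + 1) x' a')
        ≤ ∑ x', P h x a x' * (Qaux P R π k (h + 1) x' (π (h + 1) x')
            + ⨆ a' : A, gaux P R f k (h + 1) x' a') := by
      apply Finset.sum_le_sum
      intro x' _
      apply mul_le_mul_of_nonneg_left _ (hP0 h x a x')
      have h1 : (⨆ a' : A, f (h + 1) x' a') ≤ f (h + 1) x' (π (h + 1) x') :=
        ciSup_le fun a' => hgreedy (h + 1) x' a'
      have h2 : f (h + 1) x' (π (h + 1) x')
          - Qaux P R π k (h + 1) x' (π (h + 1) x')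
          ≤ gaux P R f k (h + 1) x' (π (h + 1) x') :=
        ih (h + 1) x' (π (h + 1) x') hh1 hk1
      have h3 : gaux P R f k (h + 1) x' (π (h + 1) x')
          ≤ ⨆ a' : A, gaux P R f k (h + 1) x' a' :=
        le_ciSup (Set.Finite.bddAbove (Set.finite_range _)) _
      linarith
    have hexp : ∑ x', P h x a x' * (Qaux P R π k (h + 1) x' (π (h + 1) x')
            + ⨆ a' : A, gaux P R f k (h + 1) x' a')
        = (∑ x', P h x a x' * Qaux P R π k (h + 1) x' (π (h + 1) x'))
          + ∑ x', P h x a x' * (⨆ a' : A, gaux P R f k (h + 1) x' a') := by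
      rw [← Finset.sum_add_distrib]
      exact Finset.sum_congr rfl fun x' _ => mul_add _ _ _
    rw [hexp] at hsum
    linarith
end

section
/- (Suboptimality bound under generalized concentrability.) Consider a finite-horizon MDP with horizon H and total reward in [0,1]. Let f = (f_1,...,f_H) be a value function (f_{H+1} = 0) with greedy policy π_f, and let Π be a policy class containing both π* and π_f. Then J(π*) − J(π_f) ≤ 2·max_{π ∈ Π} sum_{h=1}^H E_{(x,a) ∼ d_h^π}[ |f_h(x,a) − (T_h f_{h+1})(x,a)| ] ≤ 2·sqrt( H · max_{π ∈ Π} sum_{h=1}^H E_{(x,a) ∼ d_h^π}[ (f_h(x,a) − (T_h f_{h+1})(x,a))² ] ). -/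
/-- State occupancy of a deterministic policy `π` at each layer. -/
noncomputable def occPol {X A : Type*} [Fintype X] [DecidableEq X]
    (P : ℕ → X → A → X → ℝ) (x₁ : X) (π : ℕ → X → A) : ℕ → X → ℝ
  | 0 => fun x => if x = x₁ then 1 else 0
  | h + 1 => fun x' => ∑ x, occPol P x₁ π h x * P h x (π h x) x'

/-- Expected total reward of a deterministic policy `π` over horizon `H`. -/
noncomputable def Jval {X A : Type*} [Fintype X] [DecidableEq X]
    (P : ℕ → X → A → X → ℝ) (R : ℕ → X → A → ℝ) (x₁ : X) (H : ℕ)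
    (π : ℕ → X → A) : ℝ :=
  ∑ h ∈ Finset.range H, ∑ x, occPol P x₁ π h x * R h x (π h x)

section Aux
variable {X A : Type*} [Fintype X] [Fintype A] [Nonempty A] [DecidableEq X]
  (P : ℕ → X → A → X → ℝ) (R : ℕ → X → A → ℝ) (x₁ : X)

omit [Fintype A] [Nonempty A] in
lemma occ_nonneg (hP0 : ∀ h x a x', 0 ≤ P h x a x') (π : ℕ → X → A) :
    ∀ h x, 0 ≤ occPol P x₁ π h x := by
  intro h
  induction h with
  | zero => intro x; simp only [occPol]; split <;> norm_num
  | succ h ih =>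
    intro x'
    simp only [occPol]
    exact Finset.sum_nonneg fun x _ => mul_nonneg (ih x) (hP0 _ _ _ _)

omit [Fintype A] [Nonempty A] in
lemma occ_sum (hP1 : ∀ h x a, ∑ x', P h x a x' = 1) (π : ℕ → X → A) :
    ∀ h, ∑ x, occPol P x₁ π h x = 1 := by
  intro h
  induction h with
  | zero => simp [occPol]
  | succ h ih =>
    simp only [occPol]
    rw [Finset.sum_comm]
    simp_rw [← Finset.mul_sum, hP1, mul_one]
    exact ih

omit [Fintype A] [Nonempty A] in
/-- Telescoping identity. -/
lemma tele (H : ℕ) (f : ℕ → X → A → ℝ) (hfH : ∀ x a, f H x a = 0)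
    (π : ℕ → X → A) :
    f 0 x₁ (π 0 x₁) - Jval P R x₁ H π =
      ∑ h ∈ Finset.range H, ∑ x, occPol P x₁ π h x *
        (f h x (π h x) - (R h x (π h x)
          + ∑ x', P h x (π h x) x' * f (h + 1) x' (π (h + 1) x'))) := by
  set Av : ℕ → ℝ := fun h => ∑ x, occPol P x₁ π h x * f h x (π h x) with hAv
  have h0 : Av 0 = f 0 x₁ (π 0 x₁) := by
    simp [hAv, occPol, ite_mul, Finset.sum_ite_eq']
  have hH : Av H = 0 := by simp [hAv, hfH]
  have hstep : ∀ h, Av h - Av (h + 1) =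
      ∑ x, occPol P x₁ π h x *
        (f h x (π h x) - ∑ x', P h x (π h x) x' * f (h + 1) x' (π (h + 1) x')) := by
    intro h
    have : Av (h + 1) = ∑ x, occPol P x₁ π h x *
        ∑ x', P h x (π h x) x' * f (h + 1) x' (π (h + 1) x') := by
      simp only [hAv, occPol, Finset.sum_mul]
      rw [Finset.sum_comm]
      simp_rw [Finset.mul_sum, mul_assoc]
    rw [this, hAv, ← Finset.sum_sub_distrib]
    simp_rw [← mul_sub]
  have htel : ∑ h ∈ Finset.range H, (Av h - Av (h + 1)) = Av 0 - Av H :=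
    Finset.sum_range_sub' Av H
  calc f 0 x₁ (π 0 x₁) - Jval P R x₁ H π
      = (Av 0 - Av H) - Jval P R x₁ H π := by rw [h0, hH]; ring
    _ = ∑ h ∈ Finset.range H, ((Av h - Av (h + 1))
          - ∑ x, occPol P x₁ π h x * R h x (π h x)) := by
        rw [Finset.sum_sub_distrib, htel, Jval]
    _ = _ := by
        refine Finset.sum_congr rfl fun h _ => ?_
        rw [hstep h, ← Finset.sum_sub_distrib]
        refine Finset.sum_congr rfl fun x _ => ?_
        ring

end Aux

/-- Suboptimality bound under generalized concentrability:
`J(π*) − J(π_f)` is at most twice the maximal (over the policy class) total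
absolute Bellman residual of `f` on-policy, which in turn is bounded via
Cauchy–Schwarz by the square root of `H` times the maximal total squared
Bellman residual. -/
theorem suboptimality_generalized_concentrability
    {X A : Type*} [Fintype X] [Fintype A] [Nonempty A] [DecidableEq X]
    (H : ℕ) (P : ℕ → X → A → X → ℝ) (R : ℕ → X → A → ℝ) (x₁ : X)
    (hP0 : ∀ h x a x', 0 ≤ P h x a x') (hP1 : ∀ h x a, ∑ x', P h x a x' = 1)
    (hR : ∀ h x a, 0 ≤ R h x a ∧ R h x a ≤ 1)
    (f : ℕ → X → A → ℝ) (hfH : ∀ x a, f H x a = 0)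
    (πf : ℕ → X → A) (hgreedy : ∀ h x a, f h x a ≤ f h x (πf h x))
    (πstar : ℕ → X → A)
    (hopt : ∀ π : ℕ → X → A, Jval P R x₁ H π ≤ Jval P R x₁ H πstar)
    (Pols : Finset (ℕ → X → A)) (hstar : πstar ∈ Pols) (hf : πf ∈ Pols) :
    (Jval P R x₁ H πstar - Jval P R x₁ H πf
        ≤ 2 * Pols.sup' ⟨πstar, hstar⟩ (fun π =>
            ∑ h ∈ Finset.range H, ∑ x, occPol P x₁ π h x *
              |f h x (π h x)
                - (R h x (π h x)
                    + ∑ x', P h x (π h x) x' * (⨆ a' : A, f (h + 1) x' a'))|))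
    ∧ 2 * Pols.sup' ⟨πstar, hstar⟩ (fun π =>
          ∑ h ∈ Finset.range H, ∑ x, occPol P x₁ π h x *
            |f h x (π h x)
              - (R h x (π h x)
                  + ∑ x', P h x (π h x) x' * (⨆ a' : A, f (h + 1) x' a'))|)
        ≤ 2 * Real.sqrt (H * Pols.sup' ⟨πstar, hstar⟩ (fun π =>
            ∑ h ∈ Finset.range H, ∑ x, occPol P x₁ π h x *
              (f h x (π h x)
                - (R h x (π h x)
                    + ∑ x', P h x (π h x) x' * (⨆ a' : A, f (h + 1) x' a'))) ^ 2)) := by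
  classical
  set e : (ℕ → X → A) → ℕ → X → ℝ := fun π h x =>
    f h x (π h x) - (R h x (π h x)
      + ∑ x', P h x (π h x) x' * (⨆ a' : A, f (h + 1) x' a')) with he
  set L : (ℕ → X → A) → ℝ := fun π =>
    ∑ h ∈ Finset.range H, ∑ x, occPol P x₁ π h x * |e π h x| with hL
  set Q : (ℕ → X → A) → ℝ := fun π =>
    ∑ h ∈ Finset.range H, ∑ x, occPol P x₁ π h x * (e π h x) ^ 2 with hQ
  have hbdd : ∀ (h : ℕ) (x' : X), BddAbove (Set.range fun a => f h x' a) :=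
    fun _ _ => Set.Finite.bddAbove (Set.finite_range _)
  have hM : ∀ (h : ℕ) (x' : X), (⨆ a' : A, f h x' a') = f h x' (πf h x') :=
    fun h x' => le_antisymm (ciSup_le fun a => hgreedy h x' a) (le_ciSup (hbdd h x') _)
  have hdpos := occ_nonneg P x₁ hP0
  -- upper bound for any π : Jval π ≤ f 0 x₁ (π 0 x₁) + L π
  have hupper : ∀ π : ℕ → X → A, Jval P R x₁ H π ≤ f 0 x₁ (π 0 x₁) + L π := by
    intro π
    have ht := tele P R x₁ H f hfH π
    have h1 : -(L π) ≤ ∑ h ∈ Finset.range H, ∑ x, occPol P x₁ π h x *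
        (f h x (π h x) - (R h x (π h x)
          + ∑ x', P h x (π h x) x' * f (h + 1) x' (π (h + 1) x'))) := by
      rw [hL, ← Finset.sum_neg_distrib]
      refine Finset.sum_le_sum fun h _ => ?_
      rw [← Finset.sum_neg_distrib]
      refine Finset.sum_le_sum fun x _ => ?_
      have hPs : ∑ x', P h x (π h x) x' * f (h + 1) x' (π (h + 1) x')
          ≤ ∑ x', P h x (π h x) x' * (⨆ a' : A, f (h + 1) x' a') :=
        Finset.sum_le_sum fun x' _ =>
          mul_le_mul_of_nonneg_left (le_ciSup (hbdd _ _) _) (hP0 _ _ _ _)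
      have h2 : -(|e π h x|) ≤ f h x (π h x) - (R h x (π h x)
          + ∑ x', P h x (π h x) x' * f (h + 1) x' (π (h + 1) x')) := by
        have := neg_abs_le (e π h x)
        rw [he] at *
        dsimp only at *
        linarith
      calc -(occPol P x₁ π h x * |e π h x|)
          = occPol P x₁ π h x * (-(|e π h x|)) := by ring
        _ ≤ _ := mul_le_mul_of_nonneg_left h2 (hdpos π h x)
    linarith
  -- lower bound for πf : f 0 x₁ (πf 0 x₁) - L πf ≤ Jval πf
  have hlower : f 0 x₁ (πf 0 x₁) - L πf ≤ Jval P R x₁ H πf := by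
    have ht := tele P R x₁ H f hfH πf
    have heq : f 0 x₁ (πf 0 x₁) - Jval P R x₁ H πf =
        ∑ h ∈ Finset.range H, ∑ x, occPol P x₁ πf h x * e πf h x := by
      rw [ht]
      refine Finset.sum_congr rfl fun h _ => Finset.sum_congr rfl fun x _ => ?_
      simp only [he]
      simp_rw [hM (h + 1)]
    have hle : ∑ h ∈ Finset.range H, ∑ x, occPol P x₁ πf h x * e πf h x ≤ L πf := by
      rw [hL]
      refine Finset.sum_le_sum fun h _ => Finset.sum_le_sum fun x _ =>
        mul_le_mul_of_nonneg_left (le_abs_self _) (hdpos πf h x)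
    linarith
  have hsupL : ∀ π ∈ Pols, L π ≤ Pols.sup' ⟨πstar, hstar⟩ L :=
    fun π hπ => Finset.le_sup' L hπ
  constructor
  · have hA : f 0 x₁ (πstar 0 x₁) ≤ f 0 x₁ (πf 0 x₁) := hgreedy 0 x₁ _
    have := hupper πstar
    have h1 := hsupL πstar hstar
    have h2 := hsupL πf hf
    linarith
  · -- Cauchy–Schwarz part
    have hH0 : (0 : ℝ) ≤ H := Nat.cast_nonneg H
    have hQsup : ∀ π ∈ Pols, Q π ≤ Pols.sup' ⟨πstar, hstar⟩ Q :=
      fun π hπ => Finset.le_sup' Q hπ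
    have key : ∀ π ∈ Pols, L π ≤ Real.sqrt (H * Pols.sup' ⟨πstar, hstar⟩ Q) := by
      intro π hπ
      have hLnn : 0 ≤ L π := by
        rw [hL]
        exact Finset.sum_nonneg fun h _ => Finset.sum_nonneg fun x _ =>
          mul_nonneg (hdpos π h x) (abs_nonneg _)
      have hCS : (L π) ^ 2 ≤ H * Q π := by
        have hprod : ∀ (g : ℕ → X → ℝ),
            ∑ p ∈ (Finset.range H) ×ˢ (Finset.univ : Finset X), g p.1 p.2
              = ∑ h ∈ Finset.range H, ∑ x, g h x := fun g => by
          rw [Finset.sum_product]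
        have hcs := Finset.sum_mul_sq_le_sq_mul_sq
          ((Finset.range H) ×ˢ (Finset.univ : Finset X))
          (fun p => Real.sqrt (occPol P x₁ π p.1 p.2))
          (fun p => Real.sqrt (occPol P x₁ π p.1 p.2) * |e π p.1 p.2|)
        have e1 : ∑ p ∈ (Finset.range H) ×ˢ (Finset.univ : Finset X),
            Real.sqrt (occPol P x₁ π p.1 p.2) *
              (Real.sqrt (occPol P x₁ π p.1 p.2) * |e π p.1 p.2|) = L π := by
          simp only [hL]; rw [← hprod fun h x => occPol P x₁ π h x * |e π h x|]
          refine Finset.sum_congr rfl fun p _ => ?_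
          rw [← mul_assoc, Real.mul_self_sqrt (hdpos π p.1 p.2)]
        have e2 : ∑ p ∈ (Finset.range H) ×ˢ (Finset.univ : Finset X),
            (Real.sqrt (occPol P x₁ π p.1 p.2)) ^ 2 = (H : ℝ) := by
          rw [hprod fun h x => Real.sqrt (occPol P x₁ π h x) ^ 2]
          have : ∀ h ∈ Finset.range H,
              ∑ x, Real.sqrt (occPol P x₁ π h x) ^ 2 = 1 := by
            intro h _
            rw [← occ_sum P x₁ hP1 π h]
            exact Finset.sum_congr rfl fun x _ => Real.sq_sqrt (hdpos π h x)
          rw [Finset.sum_congr rfl this]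
          simp
        have e3 : ∑ p ∈ (Finset.range H) ×ˢ (Finset.univ : Finset X),
            (Real.sqrt (occPol P x₁ π p.1 p.2) * |e π p.1 p.2|) ^ 2 = Q π := by
          simp only [hQ]; rw [← hprod fun h x => occPol P x₁ π h x * (e π h x) ^ 2]
          refine Finset.sum_congr rfl fun p _ => ?_
          rw [mul_pow, Real.sq_sqrt (hdpos π p.1 p.2), sq_abs]
        rw [e1, e2, e3] at hcs
        exact hcs
      have hQnn : 0 ≤ Q π :=
        Finset.sum_nonneg fun h _ => Finset.sum_nonneg fun x _ =>
          mul_nonneg (hdpos π h x) (sq_nonneg _)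
      calc L π ≤ Real.sqrt (H * Q π) :=
            (Real.le_sqrt hLnn (mul_nonneg hH0 hQnn)).2 hCS
        _ ≤ _ := Real.sqrt_le_sqrt (mul_le_mul_of_nonneg_left (hQsup π hπ) hH0)
    have : Pols.sup' ⟨πstar, hstar⟩ L ≤ Real.sqrt (H * Pols.sup' ⟨πstar, hstar⟩ Q) :=
      Finset.sup'_le _ _ key
    linarith
end
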